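/- Let W be a finite-dimensional real vector space which is the internal direct sum of subspaces V and H, let ω : H × H → ℝ be an alternating bilinear form, and let π : H⁰ × H⁰ → ℝ be an alternating bilinear form on the annihilator H⁰. Define ω̃ : H → V⁰ by ω̃(h)(v + h') = ω(h,h') for v ∈ V, h' ∈ H, and define π# : H⁰ → V by the requirement η(π#(ξ)) = π(η,ξ) for all η ∈ H⁰ (this determines π#(ξ) uniquely since restriction to V is an isomorphism H⁰ ≅ V*). Then L := {(h + π#(ξ), ω̃(h) + ξ) : h ∈ H, ξ ∈ H⁰} is an isotropic subspace for the pairing ⟨(w₁,ξ₁),(w₂,ξ₂)⟩₊ = (1/2)(ξ₁(w₂) + ξ₂(w₁)) with dim L = dim W, it satisfies (V × V⁰) ∩ L = {0}, its horizontal space {w ∈ W : there exists α ∈ V⁰ with (w,α) ∈ L} equals H, and moreover: for all h₁, h₂ ∈ H the unique α ∈ V⁰ with (h₁,α) ∈ L satisfies α(h₂) = ω(h₁,h₂), and for all ξ₁, ξ₂ ∈ H⁰ the unique w ∈ V with (w,ξ₂) ∈ L satisfies ξ₁(w) = π(ξ₁,ξ₂). -/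

import Mathlib

/-- The horizontal space of a subspace `L ⊆ W × W*` relative to a subspace `V ⊆ W`:
`H = {w ∈ W : ∃ ξ ∈ V⁰, (w, ξ) ∈ L}`. -/
def horizontalSpace {W : Type*} [AddCommGroup W] [Module ℝ W]
    (L : Submodule ℝ (W × Module.Dual ℝ W)) (V : Submodule ℝ W) :
    Submodule ℝ W where
  carrier := {w | ∃ ξ ∈ V.dualAnnihilator, (w, ξ) ∈ L}
  add_mem' := by
    rintro a b ⟨ξ, hξ, hL⟩ ⟨η, hη, hL'⟩
    exact ⟨ξ + η, add_mem hξ hη, L.add_mem hL hL'⟩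
  zero_mem' := ⟨0, Submodule.zero_mem _, L.zero_mem⟩
  smul_mem' := by
    rintro c a ⟨ξ, hξ, hL⟩
    exact ⟨c • ξ, Submodule.smul_mem _ c hξ, L.smul_mem c hL⟩

/-- The natural symmetric pairing on `W × W*`:
`⟨(w₁,ξ₁),(w₂,ξ₂)⟩₊ = (1/2)(ξ₁(w₂) + ξ₂(w₁))`. -/
noncomputable def pairPlus {W : Type*} [AddCommGroup W] [Module ℝ W]
    (p q : W × Module.Dual ℝ W) : ℝ :=
  (1 / 2) * (p.2 q.1 + q.2 p.1)

/-- given `W = V ⊕ H`, an alternating bilinear form `ω` on `H` and an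
alternating bilinear form `π` on `H⁰`, the subspace
`L = {(h + π#(ξ), ω̃(h) + ξ) : h ∈ H, ξ ∈ H⁰}` is isotropic with `dim L = dim W`,
satisfies `(V × V⁰) ∩ L = {0}`, its horizontal space equals `H`, and it induces `ω` as
its horizontal 2-form and `π` as its vertical bivector. -/
theorem stmt13 {W : Type*} [AddCommGroup W] [Module ℝ W] [FiniteDimensional ℝ W]
    (V H : Submodule ℝ W) (hVH : IsCompl V H)
    (ω : H →ₗ[ℝ] H →ₗ[ℝ] ℝ) (hω : ∀ h, ω h h = 0)
    (π : H.dualAnnihilator →ₗ[ℝ] H.dualAnnihilator →ₗ[ℝ] ℝ) (hπ : ∀ ξ, π ξ ξ = 0)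
    -- `ω̃ : H → V⁰`, determined by `ω̃(h)(v + h') = ω(h,h')`:
    (omt : H →ₗ[ℝ] Module.Dual ℝ W)
    (homt₁ : ∀ h : H, omt h ∈ V.dualAnnihilator)
    (homt₂ : ∀ h h' : H, omt h (h' : W) = ω h h')
    -- `π# : H⁰ → V`, determined by `η(π#(ξ)) = π(η,ξ)` for all `η ∈ H⁰`:
    (pish : H.dualAnnihilator →ₗ[ℝ] W)
    (hpish₁ : ∀ ξ : H.dualAnnihilator, pish ξ ∈ V)
    (hpish₂ : ∀ η ξ : H.dualAnnihilator, (η : Module.Dual ℝ W) (pish ξ) = π η ξ)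
    (L : Submodule ℝ (W × Module.Dual ℝ W))
    (hL : ∀ p, p ∈ L ↔ ∃ (h : H) (ξ : H.dualAnnihilator),
        p = ((h : W) + pish ξ, omt h + (ξ : Module.Dual ℝ W))) :
    (∀ p ∈ L, ∀ q ∈ L, pairPlus p q = 0) ∧
    Module.finrank ℝ L = Module.finrank ℝ W ∧
    V.prod V.dualAnnihilator ⊓ L = ⊥ ∧
    horizontalSpace L V = H ∧
    (∀ h₁ h₂ : H, ∀ α ∈ V.dualAnnihilator, ((h₁ : W), α) ∈ L → α (h₂ : W) = ω h₁ h₂) ∧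
    (∀ ξ₁ ξ₂ : H.dualAnnihilator, ∀ w ∈ V, (w, (ξ₂ : Module.Dual ℝ W)) ∈ L →
        (ξ₁ : Module.Dual ℝ W) w = π ξ₁ ξ₂) := by
  -- skew-symmetry from alternating
  have skewω : ∀ h h' : H, ω h h' = - ω h' h := by
    intro h h'
    have := hω (h + h')
    simp only [map_add, LinearMap.add_apply, hω] at this
    linarith
  have skewπ : ∀ ξ ξ' : H.dualAnnihilator, π ξ ξ' = - π ξ' ξ := by
    intro ξ ξ'
    have := hπ (ξ + ξ')
    simp only [map_add, LinearMap.add_apply, hπ] at this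
    linarith
  -- elements of both annihilators vanish
  have hann : ∀ ξ : Module.Dual ℝ W, ξ ∈ V.dualAnnihilator → ξ ∈ H.dualAnnihilator →
      ξ = 0 := by
    intro ξ hV hH
    ext w
    obtain ⟨v, hv, h, hh, rfl⟩ := Submodule.mem_sup.mp
      (hVH.sup_eq_top ▸ Submodule.mem_top : w ∈ V ⊔ H)
    simp [(Submodule.mem_dualAnnihilator ξ).mp hV v hv,
      (Submodule.mem_dualAnnihilator ξ).mp hH h hh]
  have hdisj : ∀ w : W, w ∈ V → w ∈ H → w = 0 := by
    intro w hv hh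
    exact (Submodule.disjoint_def.mp hVH.disjoint) w hv hh
  -- annihilator evaluations
  have hHev : ∀ (ξ : H.dualAnnihilator) (h : H), (ξ : Module.Dual ℝ W) (h : W) = 0 :=
    fun ξ h => (Submodule.mem_dualAnnihilator _).mp ξ.2 h h.2
  have hVev : ∀ (h : H) (ξ : H.dualAnnihilator), omt h (pish ξ) = 0 :=
    fun h ξ => (Submodule.mem_dualAnnihilator _).mp (homt₁ h) _ (hpish₁ ξ)
  -- uniqueness lemmas for the decomposition
  have uniq₁ : ∀ (h : H) (ξ : H.dualAnnihilator), (h : W) + pish ξ ∈ V → h = 0 := by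
    intro h ξ hmem
    have : (h : W) = ((h : W) + pish ξ) - pish ξ := (add_sub_cancel_right _ _).symm
    have hhV : (h : W) ∈ V := this ▸ Submodule.sub_mem V hmem (hpish₁ ξ)
    exact Subtype.ext (hdisj _ hhV h.2)
  have uniq₂ : ∀ (h : H) (ξ : H.dualAnnihilator),
      omt h + (ξ : Module.Dual ℝ W) ∈ V.dualAnnihilator → ξ = 0 := by
    intro h ξ hmem
    have : (ξ : Module.Dual ℝ W) = (omt h + (ξ : Module.Dual ℝ W)) - omt h :=
      (add_sub_cancel_left _ _).symm
    have hξV : (ξ : Module.Dual ℝ W) ∈ V.dualAnnihilator :=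
      this ▸ Submodule.sub_mem _ hmem (homt₁ h)
    exact Subtype.ext (hann _ hξV ξ.2)
  refine ⟨?_, ?_, ?_, ?_, ?_, ?_⟩
  · -- isotropy
    intro p hp q hq
    obtain ⟨h, ξ, rfl⟩ := (hL p).mp hp
    obtain ⟨h', ξ', rfl⟩ := (hL q).mp hq
    simp only [pairPlus, LinearMap.add_apply, map_add]
    rw [homt₂ h h', homt₂ h' h, hVev h ξ', hVev h' ξ, hHev ξ h', hHev ξ' h,
      hpish₂ ξ ξ', hpish₂ ξ' ξ, skewω h h', skewπ ξ ξ']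
    ring
  · -- dimension
    set φ : (H × H.dualAnnihilator) →ₗ[ℝ] W × Module.Dual ℝ W :=
      LinearMap.prod
        (H.subtype.comp (LinearMap.fst ℝ _ _) + pish.comp (LinearMap.snd ℝ _ _))
        (omt.comp (LinearMap.fst ℝ _ _) +
          (H.dualAnnihilator.subtype).comp (LinearMap.snd ℝ _ _)) with hφ
    have hrange : LinearMap.range φ = L := by
      ext p
      rw [LinearMap.mem_range, hL p]
      constructor
      · rintro ⟨⟨h, ξ⟩, rfl⟩
        exact ⟨h, ξ, rfl⟩
      · rintro ⟨h, ξ, rfl⟩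
        exact ⟨⟨h, ξ⟩, rfl⟩
    have hker : LinearMap.ker φ = ⊥ := by
      rw [Submodule.eq_bot_iff]
      rintro ⟨h, ξ⟩ hk
      have hk' : ((h : W) + pish ξ, omt h + (ξ : Module.Dual ℝ W)) = 0 := hk
      have h1 : (h : W) + pish ξ = 0 := congrArg Prod.fst hk'
      have h2 : omt h + (ξ : Module.Dual ℝ W) = 0 := congrArg Prod.snd hk'
      have hh : h = 0 := uniq₁ h ξ (h1 ▸ Submodule.zero_mem V)
      have hξ : ξ = 0 := uniq₂ h ξ (h2 ▸ Submodule.zero_mem V.dualAnnihilator)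
      simp [hh, hξ]
    have hinj : Function.Injective φ :=
      by
        intro x y hxy
        have hmem : x - y ∈ LinearMap.ker φ := by
          exact (φ.map_sub x y).trans (sub_eq_zero.mpr hxy)
        rw [hker, Submodule.mem_bot] at hmem
        exact sub_eq_zero.mp hmem
    have e1 : Module.finrank ℝ L = Module.finrank ℝ (H × H.dualAnnihilator) := by
      rw [← hrange]
      exact (LinearEquiv.finrank_eq (LinearEquiv.ofInjective φ hinj)).symm
    have hfree : Module.Free ℝ ↥H.dualAnnihilator :=
      Module.Free.of_divisionRing ℝ ↥H.dualAnnihilator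
    have e2 : Module.finrank ℝ (W ⧸ H) = Module.finrank ℝ H.dualAnnihilator :=
      LinearEquiv.finrank_eq (Subspace.quotEquivAnnihilator H)
    have e3 := Submodule.finrank_quotient_add_finrank H
    rw [e1, Module.finrank_prod]
    omega
  · -- trivial intersection with V × V⁰
    rw [Submodule.eq_bot_iff]
    rintro p ⟨⟨hp1, hp2⟩, hpL⟩
    obtain ⟨h, ξ, rfl⟩ := (hL p).mp hpL
    have hh : h = 0 := uniq₁ h ξ hp1
    have hξ : ξ = 0 := uniq₂ h ξ hp2
    simp [hh, hξ]
  · -- horizontal space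
    ext w
    constructor
    · rintro ⟨α, hα, hmem⟩
      obtain ⟨h, ξ, heq⟩ := (hL _).mp hmem
      have h1 : w = (h : W) + pish ξ := congrArg Prod.fst heq
      have h2 : α = omt h + (ξ : Module.Dual ℝ W) := congrArg Prod.snd heq
      have hξ : ξ = 0 := uniq₂ h ξ (h2 ▸ hα)
      rw [h1, hξ]
      simp [h.2]
    · intro hw
      refine ⟨omt ⟨w, hw⟩, homt₁ _, ?_⟩
      rw [hL]
      refine ⟨⟨w, hw⟩, 0, ?_⟩
      simp
  · -- horizontal 2-form
    intro h₁ h₂ α hα hmem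
    obtain ⟨h, ξ, heq⟩ := (hL _).mp hmem
    have h1 : (h₁ : W) = (h : W) + pish ξ := congrArg Prod.fst heq
    have h2 : α = omt h + (ξ : Module.Dual ℝ W) := congrArg Prod.snd heq
    have hξ : ξ = 0 := uniq₂ h ξ (h2 ▸ hα)
    have hh : (h₁ : W) = (h : W) := by rw [h1, hξ]; simp
    have hh' : h₁ = h := Subtype.ext hh
    rw [h2, hξ, hh']
    simp [homt₂ h h₂]
  · -- vertical bivector
    intro ξ₁ ξ₂ w hw hmem
    obtain ⟨h, ξ, heq⟩ := (hL _).mp hmem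
    have h1 : w = (h : W) + pish ξ := congrArg Prod.fst heq
    have h2 : (ξ₂ : Module.Dual ℝ W) = omt h + (ξ : Module.Dual ℝ W) :=
      congrArg Prod.snd heq
    have hh : h = 0 := uniq₁ h ξ (h1 ▸ hw)
    have hξ : ξ₂ = ξ := Subtype.ext (by rw [h2, hh]; simp)
    rw [h1, hh, hξ]
    simp [hpish₂ ξ₁ ξ]
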